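/- For any topology O on a set X, the condensational equivalence class [O]_∼ equals the convex hull of the homeomorphism class [O]_≅ in the inclusion lattice of topologies on X; that is, O' ∈ [O]_∼ if and only if there exist O₁, O₂ ∈ [O]_≅ with O₁ ⊆ O' ⊆ O₂. -/

import Mathlib

open Set Filter TopologicalSpace

variable {X : Type*}

/-- The family of open sets of a topology. -/
def opensOf (O : TopologicalSpace X) : Set (Set X) := {U | O.IsOpen U}

/-- The image family f[O] = { f[U] : U ∈ O } of a topology under a bijection. -/
def imgOpens (f : X ≃ X) (O : TopologicalSpace X) : Set (Set X) :=
  (Set.image f) '' opensOf O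

/-- A topology is reversible iff every continuous self-bijection is a homeomorphism. -/
def Reversible (O : TopologicalSpace X) : Prop :=
  ∀ f : X ≃ X, @Continuous X X O O f → @Continuous X X O O f.symm

/-- The homeomorphism class [O]_≅ of a topology within the topologies on X. -/
def homeoCls (O : TopologicalSpace X) : Set (TopologicalSpace X) :=
  {O' | ∃ f : X ≃ X, imgOpens f O = opensOf O'}

/-- O₁ ≼ O₂ : there is a condensation (continuous bijection) (X,O₂) → (X,O₁). -/
def Cond (O₁ O₂ : TopologicalSpace X) : Prop :=
  ∃ f : X ≃ X, @Continuous X X O₂ O₁ f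

/-- The condensational equivalence class [O]_∼. -/
def simCls (O : TopologicalSpace X) : Set (TopologicalSpace X) :=
  {O' | Cond O' O ∧ Cond O O'}


lemma cont_iff_opens (f : X ≃ X) (O₁ O₂ : TopologicalSpace X) :
    @Continuous X X O₂ O₁ f ↔ opensOf O₁ ⊆ imgOpens f O₂ := by
  constructor
  · intro hc V hV
    refine ⟨f ⁻¹' V, ?_, ?_⟩
    · exact (continuous_def.mp hc) V hV
    · simp [Set.image_preimage_eq _ f.surjective]
  · intro h
    refine continuous_def.mpr fun V hV => ?_
    obtain ⟨U, hU, rfl⟩ := h hV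
    rwa [Set.preimage_image_eq _ f.injective]

lemma opensOf_induced (f : X ≃ X) (O : TopologicalSpace X) :
    opensOf (O.induced (f.symm : X → X)) = imgOpens f O := by
  ext V
  simp only [opensOf, imgOpens, Set.mem_setOf_eq, Set.mem_image]
  show @IsOpen X (TopologicalSpace.induced (f.symm : X → X) O) V ↔ _
  rw [isOpen_induced_iff]
  constructor <;> rintro ⟨U, hU, rfl⟩
  · exact ⟨U, hU, f.image_eq_preimage_symm U⟩
  · exact ⟨U, hU, (f.image_eq_preimage_symm U).symm⟩

lemma induced_mem_homeoCls (f : X ≃ X) (O : TopologicalSpace X) :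
    O.induced (f.symm : X → X) ∈ homeoCls O :=
  ⟨f, (opensOf_induced f O).symm⟩

/-- [O]_∼ is the convex hull of [O]_≅. -/
theorem stmt_4 (O O' : TopologicalSpace X) :
    O' ∈ simCls O ↔
      ∃ O₁ ∈ homeoCls O, ∃ O₂ ∈ homeoCls O,
        opensOf O₁ ⊆ opensOf O' ∧ opensOf O' ⊆ opensOf O₂ := by
  constructor
  · rintro ⟨⟨f, hf⟩, ⟨g, hg⟩⟩
    refine ⟨O.induced ((g.symm).symm : X → X), induced_mem_homeoCls g.symm O,
      O.induced (f.symm : X → X), induced_mem_homeoCls f O, ?_, ?_⟩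
    · rw [opensOf_induced]
      rintro V ⟨U, hU, rfl⟩
      obtain ⟨W, hW, hWU⟩ := (cont_iff_opens g O O').mp hg hU
      have : (g.symm : X → X) '' U = W := by
        rw [← hWU, Set.image_image]
        simp
      rwa [this]
    · rw [opensOf_induced]
      exact (cont_iff_opens f O' O).mp hf
  · rintro ⟨O₁, ⟨f, hf⟩, O₂, ⟨g, hg⟩, h₁, h₂⟩
    constructor
    · exact ⟨g, (cont_iff_opens g O' O).mpr (by rw [hg] at *; exact h₂.trans (le_refl _))⟩
    · refine ⟨f.symm, (cont_iff_opens f.symm O O').mpr ?_⟩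
      intro U hU
      have hfU : (f : X → X) '' U ∈ opensOf O' := h₁ (hf ▸ ⟨U, hU, rfl⟩)
      refine ⟨(f : X → X) '' U, hfU, ?_⟩
      rw [Set.image_image]
      simp
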